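/- Let d be a positive integer, G = ℤ_{12d+4}, H = {0, 3d+1, 6d+2, 9d+3} ≤ G and K = {0, 6d+2} ≤ G. Let S′ be any family of 6d pairwise disjoint 2-element subsets of G whose union is G∖H, such that exactly 2d of the sets have the form {x, x+(6d+2)} (i.e. are cosets of K) and the remaining 4d sets each have the form {x, x+(3d+1)}. Then S′ is a (12d+4, 6d, 2, 0, 4d)-DPDF and a (12d+4, 6d, 2, 12d−4, 8d)-EPDF in G. -/
import Mathlib


open Finset

/-- The multiset of internal differences of a finite subset of an additive group. -/
def dInt {G : Type*} [AddGroup G] [DecidableEq G] (D : Finset G) : Multiset G :=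
  ((D ×ˢ D).filter fun p => p.1 ≠ p.2).val.map fun p => p.1 - p.2

/-- The multiset of external differences between two finite subsets of an additive group. -/
def dExt {G : Type*} [AddGroup G] (D₁ D₂ : Finset G) : Multiset G :=
  (D₁ ×ˢ D₂).val.map fun p => p.1 - p.2

/-- The multiset union of the internal differences of a family of sets. -/
def IntFam {G : Type*} [AddGroup G] [DecidableEq G] {ι : Type*} [Fintype ι]
    (A : ι → Finset G) : Multiset G :=
  ∑ i, dInt (A i)

/-- The multiset union of external differences over ordered pairs of distinct sets. -/
def ExtFam {G : Type*} [AddGroup G] [DecidableEq G] {ι : Type*} [Fintype ι] [DecidableEq ι]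
    (A : ι → Finset G) : Multiset G :=
  ∑ i, ∑ j ∈ Finset.univ.erase i, dExt (A i) (A j)

/-- A `(v,s,k,lam,mu)`-disjoint partial difference family in the additive group `G`. -/
def IsDPDF (G : Type*) [AddGroup G] [Fintype G] [DecidableEq G] {ι : Type*} [Fintype ι]
    (v s k lam mu : ℕ) (A : ι → Finset G) : Prop :=
  Fintype.card G = v ∧ Fintype.card ι = s ∧
  (∀ i, (A i).card = k) ∧ (∀ i, (0 : G) ∉ A i) ∧
  (∀ i j, i ≠ j → Disjoint (A i) (A j)) ∧
  (∀ g : G, g ≠ 0 → (∃ i, g ∈ A i) → (IntFam A).count g = lam) ∧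
  (∀ g : G, g ≠ 0 → (∀ i, g ∉ A i) → (IntFam A).count g = mu)

/-- A `(v,s,k,lam,mu)`-external partial difference family in the additive group `G`. -/
def IsEPDF (G : Type*) [AddGroup G] [Fintype G] [DecidableEq G] {ι : Type*} [Fintype ι]
    [DecidableEq ι] (v s k lam mu : ℕ) (A : ι → Finset G) : Prop :=
  Fintype.card G = v ∧ Fintype.card ι = s ∧
  (∀ i, (A i).card = k) ∧ (∀ i, (0 : G) ∉ A i) ∧
  (∀ i j, i ≠ j → Disjoint (A i) (A j)) ∧
  (∀ g : G, g ≠ 0 → (∃ i, g ∈ A i) → (ExtFam A).count g = lam) ∧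
  (∀ g : G, g ≠ 0 → (∀ i, g ∉ A i) → (ExtFam A).count g = mu)

section Aux
variable {G : Type*} [CommRing G] [DecidableEq G]

lemma count_dExt_eq (D1 D2 : Finset G) (g : G) :
    (dExt D1 D2).count g = ∑ y ∈ D2, (if g + y ∈ D1 then (1:ℕ) else 0) := by
  rw [dExt, Multiset.count_map]
  rw [show ((D1 ×ˢ D2).val.filter fun p => g = p.1 - p.2).card
      = ((D1 ×ˢ D2).filter fun p => g = p.1 - p.2).card from rfl]
  rw [Finset.card_filter, Finset.sum_product, Finset.sum_comm]
  refine Finset.sum_congr rfl fun y _ => ?_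
  rw [← Finset.sum_ite_eq' D1 (g + y) (fun _ => (1:ℕ))]
  refine Finset.sum_congr rfl fun x _ => ?_
  refine if_congr ?_ rfl rfl
  constructor
  · intro e; linear_combination -e
  · intro e; linear_combination -e

lemma count_dInt_pair (x δ g : G) (hδ : δ ≠ 0) :
    (dInt ({x, x + δ} : Finset G)).count g
      = (if g = δ then 1 else 0) + (if g = -δ then 1 else 0) := by
  have hne : ¬ (x = x + δ) := by
    intro e; exact hδ (by linear_combination -e)
  have hne' : ¬ (x + δ = x) := fun e => hne e.symm
  have hnm : x ∉ ({x + δ} : Finset G) := by simpa using hne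
  rw [dInt, Multiset.count_map]
  rw [show ((({x, x+δ} : Finset G) ×ˢ {x, x+δ}).filter fun p => p.1 ≠ p.2).val.filter
        (fun p => g = p.1 - p.2)
      = (((({x, x+δ} : Finset G) ×ˢ {x, x+δ}).filter fun p => p.1 ≠ p.2).filter
        (fun p => g = p.1 - p.2)).val from rfl]
  rw [show (((({x, x+δ} : Finset G) ×ˢ {x, x+δ}).filter fun p => p.1 ≠ p.2).filter
        (fun p => g = p.1 - p.2)).val.card
      = (((({x, x+δ} : Finset G) ×ˢ {x, x+δ}).filter fun p => p.1 ≠ p.2).filter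
        (fun p => g = p.1 - p.2)).card from rfl]
  rw [Finset.filter_filter, Finset.card_filter, Finset.sum_product]
  rw [Finset.sum_insert hnm, Finset.sum_singleton, Finset.sum_insert hnm,
    Finset.sum_singleton, Finset.sum_insert hnm, Finset.sum_singleton]
  have e1 : x - (x + δ) = -δ := by ring
  have e2 : x + δ - x = δ := by ring
  simp only [ne_eq, not_true_eq_false, false_and, if_false, hne, hne', not_false_iff,
    true_and, e1, e2]
  simp only [add_zero, zero_add]
  omega

lemma count_dExt_pair_diag (x δ g : G) (hδ : δ ≠ 0) (hg : g ≠ 0) :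
    (dExt ({x, x + δ} : Finset G) ({x, x + δ})).count g
      = (if g = δ then 1 else 0) + (if g = -δ then 1 else 0) := by
  have hne : ¬ (x = x + δ) := by
    intro e; exact hδ (by linear_combination -e)
  have hnm : x ∉ ({x + δ} : Finset G) := by simpa using hne
  rw [count_dExt_eq, Finset.sum_insert hnm, Finset.sum_singleton]
  have m1 : (g + x ∈ ({x, x + δ} : Finset G)) ↔ g = δ := by
    simp only [Finset.mem_insert, Finset.mem_singleton]
    constructor
    · rintro (e | e)
      · exact absurd (by linear_combination e) hg
      · linear_combination e
    · intro e; right; linear_combination e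
  have m2 : (g + (x + δ) ∈ ({x, x + δ} : Finset G)) ↔ g = -δ := by
    simp only [Finset.mem_insert, Finset.mem_singleton]
    constructor
    · rintro (e | e)
      · linear_combination e
      · exact absurd (by linear_combination e) hg
    · intro e; left; linear_combination e
  rw [if_congr m1 rfl rfl, if_congr m2 rfl rfl]

end Aux

/-- for `d ≥ 1`, `G = ℤ_{12d+4}`, `H = {0, 3d+1, 6d+2, 9d+3}` and
`K = {0, 6d+2}`, any family of `6d` pairwise disjoint 2-element subsets of `G` whose
union is `G∖H`, with exactly `2d` sets of the form `{x, x+(6d+2)}` (cosets of `K`) and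
the remaining `4d` sets of the form `{x, x+(3d+1)}`, is a `(12d+4,6d,2,0,4d)`-DPDF and
a `(12d+4,6d,2,12d−4,8d)`-EPDF in `G`. -/
theorem coset_partition_dpdf_epdf (d : ℕ) (hd : 0 < d) [NeZero (12 * d + 4)]
    (A : Fin (6 * d) → Finset (ZMod (12 * d + 4)))
    (hcard : ∀ i, (A i).card = 2)
    (hdisj : ∀ i j, i ≠ j → Disjoint (A i) (A j))
    (hunion : ∀ x : ZMod (12 * d + 4), (∃ i, x ∈ A i) ↔
      (x ≠ 0 ∧ x ≠ ((3 * d + 1 : ℕ) : ZMod (12 * d + 4)) ∧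
        x ≠ ((6 * d + 2 : ℕ) : ZMod (12 * d + 4)) ∧
        x ≠ ((9 * d + 3 : ℕ) : ZMod (12 * d + 4))))
    (T : Finset (Fin (6 * d))) (hT : T.card = 2 * d)
    (hKcoset : ∀ i ∈ T, ∃ x : ZMod (12 * d + 4),
      A i = {x, x + ((6 * d + 2 : ℕ) : ZMod (12 * d + 4))})
    (hHalf : ∀ i ∉ T, ∃ x : ZMod (12 * d + 4),
      A i = {x, x + ((3 * d + 1 : ℕ) : ZMod (12 * d + 4))}) :
    IsDPDF (ZMod (12 * d + 4)) (12 * d + 4) (6 * d) 2 0 (4 * d) A ∧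
    IsEPDF (ZMod (12 * d + 4)) (12 * d + 4) (6 * d) 2 (12 * d - 4) (8 * d) A := by
  set h : ZMod (12 * d + 4) := ((3 * d + 1 : ℕ) : ZMod (12 * d + 4)) with hdef
  have e2 : ((6 * d + 2 : ℕ) : ZMod (12 * d + 4)) = h + h := by
    rw [hdef, show 6 * d + 2 = (3 * d + 1) + (3 * d + 1) by ring, Nat.cast_add]
  have e3 : ((9 * d + 3 : ℕ) : ZMod (12 * d + 4)) = h + h + h := by
    rw [hdef, show 9 * d + 3 = (3 * d + 1) + (3 * d + 1) + (3 * d + 1) by ring,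
      Nat.cast_add, Nat.cast_add]
  have e4 : h + h + h + h = 0 := by
    rw [hdef, ← Nat.cast_add, ← Nat.cast_add, ← Nat.cast_add,
      show 3 * d + 1 + (3 * d + 1) + (3 * d + 1) + (3 * d + 1) = 12 * d + 4 by ring,
      ZMod.natCast_self]
  rw [e2] at hunion hKcoset
  rw [e3] at hunion
  have hz : ∀ m : ℕ, 0 < m → m < 12 * d + 4 → ((m : ZMod (12 * d + 4)) ≠ 0) := by
    intro m hm1 hm2 hc
    rw [ZMod.natCast_eq_zero_iff] at hc
    exact absurd (Nat.le_of_dvd hm1 hc) (by omega)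
  have hne1 : h ≠ 0 := hz (3 * d + 1) (by omega) (by omega)
  have hne2 : h + h ≠ 0 := by rw [← e2]; exact hz (6 * d + 2) (by omega) (by omega)
  have hne3 : h + h + h ≠ 0 := by rw [← e3]; exact hz (9 * d + 3) (by omega) (by omega)
  have d12 : h ≠ h + h := fun e => hne1 (by linear_combination -e)
  have d13 : h ≠ h + h + h := fun e => hne2 (by linear_combination -e)
  have d23 : h + h ≠ h + h + h := fun e => hne1 (by linear_combination -e)
  have negh : -h = h + h + h := by linear_combination -e4
  have negh2 : -(h + h) = h + h := by linear_combination -e4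
  -- structure lemma
  have hI : ∀ g : ZMod (12 * d + 4), (IntFam A).count g =
      2 * d * ((if g = h + h then 1 else 0) + (if g = h + h then 1 else 0)) +
      4 * d * ((if g = h then 1 else 0) + (if g = h + h + h then 1 else 0)) := by
    intro g
    rw [IntFam, Multiset.count_sum', ← Finset.sum_add_sum_compl T]
    have hTpart : ∀ i ∈ T, (dInt (A i)).count g
        = (if g = h + h then 1 else 0) + (if g = h + h then 1 else 0) := by
      intro i hi
      obtain ⟨x, hx⟩ := hKcoset i hi
      rw [hx, count_dInt_pair _ _ _ hne2, negh2]
    have hCpart : ∀ i ∈ Tᶜ, (dInt (A i)).count g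
        = (if g = h then 1 else 0) + (if g = h + h + h then 1 else 0) := by
      intro i hi
      obtain ⟨x, hx⟩ := hHalf i (Finset.mem_compl.mp hi)
      rw [hx, count_dInt_pair _ _ _ hne1, negh]
    rw [Finset.sum_congr rfl hTpart, Finset.sum_congr rfl hCpart,
      Finset.sum_const, Finset.sum_const, hT, Finset.card_compl, Fintype.card_fin, hT,
      smul_eq_mul, smul_eq_mul, show 6 * d - 2 * d = 4 * d by omega]
  have hIzero : ∀ g : ZMod (12 * d + 4),
      (g ≠ 0 ∧ g ≠ h ∧ g ≠ h + h ∧ g ≠ h + h + h) → (IntFam A).count g = 0 := by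
    intro g hQ
    rw [hI g, if_neg hQ.2.2.1, if_neg hQ.2.1, if_neg hQ.2.2.2]
    ring
  have hIval : ∀ g : ZMod (12 * d + 4),
      (g = h ∨ g = h + h ∨ g = h + h + h) → (IntFam A).count g = 4 * d := by
    rintro g (rfl | rfl | rfl) <;> rw [hI] <;>
      simp [d12, d13, d23, Ne.symm d12, Ne.symm d13, Ne.symm d23] <;> omega
  -- indicator sum
  have sum_ind : ∀ (y : ZMod (12 * d + 4)) (v : ℕ),
      (∑ i, if y ∈ A i then v else 0)
        = if (y ≠ 0 ∧ y ≠ h ∧ y ≠ h + h ∧ y ≠ h + h + h) then v else 0 := by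
    intro y v
    by_cases hQ : (y ≠ 0 ∧ y ≠ h ∧ y ≠ h + h ∧ y ≠ h + h + h)
    · obtain ⟨i₀, hi₀⟩ := (hunion y).2 hQ
      rw [if_pos hQ, Finset.sum_eq_single i₀]
      · rw [if_pos hi₀]
      · intro j _ hj
        rw [if_neg]
        intro hyj
        exact (Finset.disjoint_left.mp (hdisj j i₀ hj) hyj) hi₀
      · intro habs; exact absurd (Finset.mem_univ i₀) habs
    · rw [if_neg hQ]
      refine Finset.sum_eq_zero fun j _ => ?_
      rw [if_neg]
      intro hyj
      exact hQ ((hunion y).1 ⟨j, hyj⟩)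
  -- the H finset
  set Hf : Finset (ZMod (12 * d + 4)) := {0, h, h + h, h + h + h} with hHf
  have hcard4 : Hf.card = 4 := by
    rw [hHf]
    rw [Finset.card_insert_of_notMem (by
        simp only [Finset.mem_insert, Finset.mem_singleton]
        push_neg
        exact ⟨Ne.symm hne1, Ne.symm hne2, Ne.symm hne3⟩),
      Finset.card_insert_of_notMem (by
        simp only [Finset.mem_insert, Finset.mem_singleton]
        push_neg
        exact ⟨d12, d13⟩),
      Finset.card_insert_of_notMem (by
        simp only [Finset.mem_singleton]
        exact d23),
      Finset.card_singleton]
  have hclose : ∀ z ∈ Hf, ∀ w ∈ Hf, z - w ∈ Hf := by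
    intro z hz w hw
    simp only [hHf, Finset.mem_insert, Finset.mem_singleton] at hz hw ⊢
    rcases hz with rfl | rfl | rfl | rfl <;> rcases hw with rfl | rfl | rfl | rfl <;>
      first
        | (left; ring1)
        | (right; left; ring1)
        | (right; right; left; ring1)
        | (right; right; right; ring1)
        | (right; left; linear_combination -e4)
        | (right; right; left; linear_combination -e4)
        | (right; right; right; linear_combination -e4)
  have himgcard : ∀ g : ZMod (12 * d + 4), (Hf.image (fun z => z - g)).card = 4 := by
    intro g
    rw [Finset.card_image_of_injective _ (fun a b e => by linear_combination e), hcard4]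
  -- the big count N(g)
  have hNfil : ∀ g : ZMod (12 * d + 4),
      (Finset.univ.filter fun y : ZMod (12 * d + 4) => ¬((y ≠ 0 ∧ y ≠ h ∧ y ≠ h + h ∧ y ≠ h + h + h) ∧
        (g + y ≠ 0 ∧ g + y ≠ h ∧ g + y ≠ h + h ∧ g + y ≠ h + h + h)))
      = Hf ∪ Hf.image (fun z => z - g) := by
    intro g
    ext y
    simp only [Finset.mem_filter, Finset.mem_univ, true_and, Finset.mem_union,
      Finset.mem_image]
    constructor
    · intro hy
      rcases not_and_or.mp hy with hy | hy
      · left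
        simp only [hHf, Finset.mem_insert, Finset.mem_singleton]
        push_neg at hy
        by_contra hc
        push_neg at hc
        exact hc.2.2.2 (hy hc.1 hc.2.1 hc.2.2.1)
      · right
        refine ⟨g + y, ?_, by ring⟩
        simp only [hHf, Finset.mem_insert, Finset.mem_singleton]
        push_neg at hy
        by_contra hc
        push_neg at hc
        exact hc.2.2.2 (hy hc.1 hc.2.1 hc.2.2.1)
    · intro hy
      rcases hy with hy | ⟨z, hz, rfl⟩
      · intro hc
        simp only [hHf, Finset.mem_insert, Finset.mem_singleton] at hy
        obtain ⟨a, b, c, dd⟩ := hc.1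
        rcases hy with rfl | rfl | rfl | rfl
        exacts [a rfl, b rfl, c rfl, dd rfl]
      · intro hc
        have hgz : g + (z - g) = z := by ring
        rw [hgz] at hc
        simp only [hHf, Finset.mem_insert, Finset.mem_singleton] at hz
        obtain ⟨a, b, c, dd⟩ := hc.2
        rcases hz with rfl | rfl | rfl | rfl
        exacts [a rfl, b rfl, c rfl, dd rfl]
  have hcardU : (Finset.univ : Finset (ZMod (12 * d + 4))).card = 12 * d + 4 := by
    rw [Finset.card_univ, ZMod.card]
  have hNces : ∀ g : ZMod (12 * d + 4),
      (Finset.univ.filter fun y : ZMod (12 * d + 4) =>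
        (y ≠ 0 ∧ y ≠ h ∧ y ≠ h + h ∧ y ≠ h + h + h) ∧
        (g + y ≠ 0 ∧ g + y ≠ h ∧ g + y ≠ h + h ∧ g + y ≠ h + h + h)).card
      + (Hf ∪ Hf.image (fun z => z - g)).card = 12 * d + 4 := by
    intro g
    rw [← hNfil g, Finset.card_filter_add_card_filter_not, hcardU]
  have hNhi : ∀ g : ZMod (12 * d + 4), (g = h ∨ g = h + h ∨ g = h + h + h) →
      (Finset.univ.filter fun y : ZMod (12 * d + 4) =>
        (y ≠ 0 ∧ y ≠ h ∧ y ≠ h + h ∧ y ≠ h + h + h) ∧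
        (g + y ≠ 0 ∧ g + y ≠ h ∧ g + y ≠ h + h ∧ g + y ≠ h + h + h)).card = 12 * d := by
    intro g hg
    have hgH : g ∈ Hf := by
      simp only [hHf, Finset.mem_insert, Finset.mem_singleton]
      rcases hg with rfl | rfl | rfl
      · exact Or.inr (Or.inl rfl)
      · exact Or.inr (Or.inr (Or.inl rfl))
      · exact Or.inr (Or.inr (Or.inr rfl))
    have himg : Hf.image (fun z => z - g) = Hf := by
      apply Finset.eq_of_subset_of_card_le
      · intro a ha
        obtain ⟨z, hz, rfl⟩ := Finset.mem_image.mp ha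
        exact hclose z hz g hgH
      · rw [himgcard g, hcard4]
    have := hNces g
    rw [himg, Finset.union_self, hcard4] at this
    omega
  have hNlo : ∀ g : ZMod (12 * d + 4),
      (g ≠ 0 ∧ g ≠ h ∧ g ≠ h + h ∧ g ≠ h + h + h) →
      (Finset.univ.filter fun y : ZMod (12 * d + 4) =>
        (y ≠ 0 ∧ y ≠ h ∧ y ≠ h + h ∧ y ≠ h + h + h) ∧
        (g + y ≠ 0 ∧ g + y ≠ h ∧ g + y ≠ h + h ∧ g + y ≠ h + h + h)).card = 12 * d - 4 := by
    intro g hg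
    have hdisjU : Disjoint Hf (Hf.image (fun z => z - g)) := by
      rw [Finset.disjoint_right]
      intro a ha haH
      obtain ⟨z, hz, rfl⟩ := Finset.mem_image.mp ha
      have hmem : z - (z - g) ∈ Hf := hclose z hz _ haH
      rw [show z - (z - g) = g by ring] at hmem
      simp only [hHf, Finset.mem_insert, Finset.mem_singleton] at hmem
      rcases hmem with rfl | rfl | rfl | rfl
      exacts [hg.1 rfl, hg.2.1 rfl, hg.2.2.1 rfl, hg.2.2.2 rfl]
    have := hNces g
    rw [Finset.card_union_of_disjoint hdisjU, hcard4, himgcard g] at this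
    omega
  -- total double sum equals N(g)
  have hDouble : ∀ g : ZMod (12 * d + 4),
      (∑ i, ∑ j, (dExt (A i) (A j)).count g)
      = (Finset.univ.filter fun y : ZMod (12 * d + 4) =>
        (y ≠ 0 ∧ y ≠ h ∧ y ≠ h + h ∧ y ≠ h + h + h) ∧
        (g + y ≠ 0 ∧ g + y ≠ h ∧ g + y ≠ h + h ∧ g + y ≠ h + h + h)).card := by
    intro g
    have step1 : (∑ i, ∑ j, (dExt (A i) (A j)).count g)
        = ∑ j, ∑ y ∈ A j, (if (g + y ≠ 0 ∧ g + y ≠ h ∧ g + y ≠ h + h ∧ g + y ≠ h + h + h)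
            then (1:ℕ) else 0) := by
      rw [Finset.sum_comm]
      refine Finset.sum_congr rfl fun j _ => ?_
      have : (∑ i, (dExt (A i) (A j)).count g)
          = ∑ i, ∑ y ∈ A j, (if g + y ∈ A i then (1:ℕ) else 0) :=
        Finset.sum_congr rfl fun i _ => count_dExt_eq (A i) (A j) g
      rw [this, Finset.sum_comm]
      exact Finset.sum_congr rfl fun y _ => sum_ind (g + y) 1
    rw [step1]
    have step2 : ∀ j, (∑ y ∈ A j, (if (g + y ≠ 0 ∧ g + y ≠ h ∧ g + y ≠ h + h ∧
          g + y ≠ h + h + h) then (1:ℕ) else 0))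
        = ∑ y : ZMod (12 * d + 4), (if y ∈ A j then
            (if (g + y ≠ 0 ∧ g + y ≠ h ∧ g + y ≠ h + h ∧ g + y ≠ h + h + h)
              then (1:ℕ) else 0) else 0) := by
      intro j
      rw [Finset.sum_ite_mem, Finset.univ_inter]
    simp only [step2]
    rw [Finset.sum_comm]
    have step3 : ∀ y : ZMod (12 * d + 4),
        (∑ j, if y ∈ A j then
          (if (g + y ≠ 0 ∧ g + y ≠ h ∧ g + y ≠ h + h ∧ g + y ≠ h + h + h)
            then (1:ℕ) else 0) else 0)
        = if (y ≠ 0 ∧ y ≠ h ∧ y ≠ h + h ∧ y ≠ h + h + h) then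
            (if (g + y ≠ 0 ∧ g + y ≠ h ∧ g + y ≠ h + h ∧ g + y ≠ h + h + h)
              then (1:ℕ) else 0) else 0 := fun y => sum_ind y _
    simp only [step3]
    rw [Finset.card_filter]
    refine Finset.sum_congr rfl fun y _ => ?_
    by_cases h1 : (y ≠ 0 ∧ y ≠ h ∧ y ≠ h + h ∧ y ≠ h + h + h) <;>
      by_cases h2 : (g + y ≠ 0 ∧ g + y ≠ h ∧ g + y ≠ h + h ∧ g + y ≠ h + h + h) <;>
      simp [h1, h2]
  -- diagonal equals IntFam count
  have hdiag : ∀ g : ZMod (12 * d + 4), g ≠ 0 →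
      (∑ i, (dExt (A i) (A i)).count g) = (IntFam A).count g := by
    intro g hg
    rw [IntFam, Multiset.count_sum']
    refine Finset.sum_congr rfl fun i _ => ?_
    by_cases hi : i ∈ T
    · obtain ⟨x, hx⟩ := hKcoset i hi
      rw [hx, count_dExt_pair_diag _ _ _ hne2 hg, count_dInt_pair _ _ _ hne2]
    · obtain ⟨x, hx⟩ := hHalf i hi
      rw [hx, count_dExt_pair_diag _ _ _ hne1 hg, count_dInt_pair _ _ _ hne1]
  -- key identity
  have hEkey : ∀ g : ZMod (12 * d + 4),
      (ExtFam A).count g + (∑ i, (dExt (A i) (A i)).count g)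
      = ∑ i, ∑ j, (dExt (A i) (A j)).count g := by
    intro g
    have h1 : (ExtFam A).count g
        = ∑ i, ∑ j ∈ Finset.univ.erase i, (dExt (A i) (A j)).count g := by
      rw [ExtFam, Multiset.count_sum']
      exact Finset.sum_congr rfl fun i _ => Multiset.count_sum'
    rw [h1, ← Finset.sum_add_distrib]
    exact Finset.sum_congr rfl fun i _ =>
      Finset.sum_erase_add _ _ (Finset.mem_univ i)
  -- basic facts
  have hzero : ∀ i, (0 : ZMod (12 * d + 4)) ∉ A i := by
    intro i h0
    exact ((hunion 0).1 ⟨i, h0⟩).1 rfl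
  have hcases : ∀ g : ZMod (12 * d + 4), g ≠ 0 → (∀ i, g ∉ A i) →
      (g = h ∨ g = h + h ∨ g = h + h + h) := by
    intro g hg hnot
    by_contra hc
    push_neg at hc
    obtain ⟨i, hi⟩ := (hunion g).2 ⟨hg, hc.1, hc.2.1, hc.2.2⟩
    exact hnot i hi
  refine ⟨⟨ZMod.card _, Fintype.card_fin _, hcard, hzero, hdisj, ?_, ?_⟩,
    ⟨ZMod.card _, Fintype.card_fin _, hcard, hzero, hdisj, ?_, ?_⟩⟩
  · -- DPDF lam = 0
    intro g hg hex
    have hQ := (hunion g).1 hex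
    exact hIzero g hQ
  · -- DPDF mu = 4d
    intro g hg hnot
    exact hIval g (hcases g hg hnot)
  · -- EPDF lam = 12d - 4
    intro g hg hex
    have hQ := (hunion g).1 hex
    have hk := hEkey g
    rw [hdiag g hg, hIzero g hQ, hDouble g, hNlo g hQ] at hk
    omega
  · -- EPDF mu = 8d
    intro g hg hnot
    have hc := hcases g hg hnot
    have hk := hEkey g
    rw [hdiag g hg, hIval g hc, hDouble g, hNhi g hc] at hk
    omega
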